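/- There exists a probability measure π on ℝ with finite second moment (∫ y² dπ(y) < ∞) such that for every t > 0, the supremum over x ∈ ℝ of the variance of the isotropic tilt T_{t,tx}π is infinite: sup_{x∈ℝ} Var(T_{t,tx}π) = ∞, i.e., the susceptibility χ_t(π) = ∞ for every t > 0. -/

import Mathlib

open MeasureTheory Set
open scoped ENNReal NNReal

noncomputable section

/-- The one-dimensional isotropic tilt `T_{t,tx}π`, with density proportional to
`exp(-(t/2)y² + t x y)` with respect to `π`. -/
def tilt1 (π : Measure ℝ) (t x : ℝ) : Measure ℝ :=
  ((π.withDensity fun y => ENNReal.ofReal (Real.exp (-(t/2) * y^2 + t * x * y))) univ)⁻¹ •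
    π.withDensity fun y => ENNReal.ofReal (Real.exp (-(t/2) * y^2 + t * x * y))

/-- Variance of a measure on `ℝ`. -/
def var1 (μ : Measure ℝ) : ℝ := (∫ y, y^2 ∂μ) - (∫ y, y ∂μ)^2

def dsum (c : ℕ → ℝ) (a : ℕ → ℝ) : Measure ℝ :=
  Measure.sum (fun n => ENNReal.ofReal (c n) • Measure.dirac (a n))

lemma dsum_univ (c a : ℕ → ℝ) (hc : ∀ n, 0 ≤ c n) (hs : Summable c) :
    dsum c a univ = ENNReal.ofReal (∑' n, c n) := by
  rw [dsum, Measure.sum_apply _ MeasurableSet.univ,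
    ENNReal.ofReal_tsum_of_nonneg hc hs]
  simp

lemma withDensity_dirac (g : ℝ → ℝ≥0∞) (hg : Measurable g) (p : ℝ) :
    (Measure.dirac p).withDensity g = g p • Measure.dirac p := by
  classical
  ext s hs
  rw [withDensity_apply _ hs, Measure.smul_apply, Measure.dirac_apply' _ hs,
    setLIntegral_dirac' hg hs]
  by_cases h : p ∈ s <;> simp [h]

lemma withDensity_dsum (c a : ℕ → ℝ) (h : ℝ → ℝ) (hc : ∀ n, 0 ≤ c n)
    (hh : Measurable h) :
    (dsum c a).withDensity (fun y => ENNReal.ofReal (h y)) =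
      dsum (fun n => c n * h (a n)) a := by
  rw [dsum, withDensity_sum, dsum]
  congr 1
  funext n
  rw [withDensity_smul_measure, withDensity_dirac _ (hh.ennreal_ofReal),
    smul_smul, ← ENNReal.ofReal_mul (hc n)]

lemma integrable_dsum (c a : ℕ → ℝ) (f : ℝ → ℝ) (hc : ∀ n, 0 ≤ c n)
    (hf : Measurable f) (hs : Summable (fun n => c n * |f (a n)|)) :
    Integrable f (dsum c a) := by
  refine ⟨hf.aestronglyMeasurable, ?_⟩
  rw [HasFiniteIntegral, dsum, lintegral_sum_measure]
  have : ∀ n : ℕ, (∫⁻ y, ‖f y‖ₑ ∂(ENNReal.ofReal (c n) • Measure.dirac (a n)))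
      = ENNReal.ofReal (c n * |f (a n)|) := by
    intro n
    rw [lintegral_smul_measure, lintegral_dirac, ENNReal.ofReal_mul (hc n)]
    congr 1
    rw [← Real.enorm_eq_ofReal_abs]
  simp_rw [this]
  rw [← ENNReal.ofReal_tsum_of_nonneg (fun n => mul_nonneg (hc n) (abs_nonneg _)) hs]
  exact ENNReal.ofReal_lt_top

lemma integral_dsum (c a : ℕ → ℝ) (f : ℝ → ℝ) (hc : ∀ n, 0 ≤ c n)
    (hf : Integrable f (dsum c a)) :
    ∫ y, f y ∂(dsum c a) = ∑' n, c n * f (a n) := by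
  rw [dsum, integral_sum_measure hf]
  congr 1
  funext n
  rw [integral_smul_measure, integral_dirac, ENNReal.toReal_ofReal (hc n), smul_eq_mul]


lemma key_bound (c u : ℝ) (hc : 0 ≤ c) (hu : 0 ≤ u) :
    Real.exp (c*u - u^3) * u^2 ≤ Real.exp ((c+3)^2) * Real.exp (-u) := by
  have h1 : u^2 ≤ Real.exp (2*u) := by
    have := Real.add_one_le_exp u
    have h2 : u ≤ Real.exp u := by nlinarith
    have h3 : Real.exp (2*u) = Real.exp u * Real.exp u := by
      rw [← Real.exp_add]; ring_nf
    nlinarith [Real.exp_pos u]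
  have h4 : Real.exp (c*u - u^3) * u^2 ≤ Real.exp (c*u - u^3) * Real.exp (2*u) :=
    mul_le_mul_of_nonneg_left h1 (Real.exp_pos _).le
  rw [← Real.exp_add] at h4
  refine h4.trans ?_
  rw [← Real.exp_add]
  apply Real.exp_le_exp.mpr
  -- need : c*u - u^3 + 2*u ≤ (c+3)^2 - u, i.e. (c+3)*u ≤ u^3 + (c+3)^2
  rcases le_or_gt (u^2) (c+3) with h | h
  · have hu3 : u ≤ c + 3 := by nlinarith
    nlinarith
  · nlinarith [mul_le_mul_of_nonneg_right h.le hu]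

lemma nat_le_two_pow (n : ℕ) : (n : ℝ) + 1 ≤ 2^n := by
  have h : n < 2^n := Nat.lt_two_pow_self (n := n)
  have h2 : n + 1 ≤ 2^n := h
  exact_mod_cast Nat.cast_le.mpr h2

lemma summable_master (c : ℝ) (hc : 0 ≤ c) (b : ℕ → ℝ)
    (hb : ∀ n, 0 ≤ b n)
    (hle : ∀ n, b n ≤ Real.exp (c * 2^n - ((2:ℝ)^n)^3) * ((2:ℝ)^n)^2) :
    Summable b := by
  have hgeo : Summable (fun n : ℕ => Real.exp ((c+3)^2) * Real.exp (-1) ^ n) :=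
    (summable_geometric_of_lt_one (Real.exp_pos _).le
      (Real.exp_lt_one_iff.mpr (by norm_num))).mul_left _
  refine Summable.of_nonneg_of_le hb (fun n => ?_) hgeo
  have h1 : b n ≤ Real.exp ((c+3)^2) * Real.exp (-(2:ℝ)^n) :=
    (hle n).trans (key_bound c (2^n) hc (by positivity))
  refine h1.trans ?_
  have h2 : Real.exp (-(2:ℝ)^n) ≤ Real.exp (-1) ^ n := by
    rw [← Real.exp_nat_mul]
    apply Real.exp_le_exp.mpr
    have := nat_le_two_pow n
    push_cast
    linarith
  exact mul_le_mul_of_nonneg_left h2 (Real.exp_pos _).le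


-- the atoms
def Apt (n : ℕ) : ℝ := 2^n
-- the (unnormalized) weights
def Ewt (n : ℕ) : ℝ := Real.exp (-(Apt n)^3)
def s0 : ℝ := ∑' n, Ewt n

lemma Apt_one_le (n : ℕ) : 1 ≤ Apt n := one_le_pow₀ (by norm_num)
lemma Apt_pos (n : ℕ) : 0 < Apt n := lt_of_lt_of_le one_pos (Apt_one_le n)
lemma Ewt_pos (n : ℕ) : 0 < Ewt n := Real.exp_pos _

lemma summable_Ewt_sq : Summable (fun n => Ewt n * (Apt n)^2) := by
  refine summable_master 0 le_rfl _
    (fun n => mul_nonneg (Ewt_pos n).le (sq_nonneg _)) (fun n => le_of_eq ?_)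
  simp only [Ewt, Apt]
  ring_nf

lemma summable_Ewt : Summable Ewt := by
  refine summable_master 0 le_rfl _ (fun n => (Ewt_pos n).le) (fun n => ?_)
  have h2 : 1 ≤ (Apt n)^2 := one_le_pow₀ (Apt_one_le n)
  have h1 : Ewt n ≤ Ewt n * (Apt n)^2 := by
    nlinarith [Ewt_pos n]
  refine h1.trans (le_of_eq ?_)
  simp only [Ewt, Apt]
  ring_nf

lemma s0_pos : 0 < s0 :=
  lt_of_lt_of_le (Ewt_pos 0) (summable_Ewt.le_tsum 0 (fun m _ => (Ewt_pos m).le))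

def pi0 : Measure ℝ := dsum (fun n => Ewt n / s0) Apt

lemma pi0_prob : IsProbabilityMeasure pi0 := by
  constructor
  rw [pi0, dsum_univ _ _ (fun n => div_nonneg (Ewt_pos n).le s0_pos.le)
    (summable_Ewt.div_const s0), tsum_div_const, ← s0, div_self s0_pos.ne',
    ENNReal.ofReal_one]

lemma pi0_moment : Integrable (fun y => y^2) pi0 := by
  refine integrable_dsum _ _ _ (fun n => div_nonneg (Ewt_pos n).le s0_pos.le)
    (by fun_prop) ?_
  have : (fun n => Ewt n / s0 * |(Apt n)^2|) = fun n => Ewt n * (Apt n)^2 / s0 := by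
    funext n
    rw [abs_of_nonneg (sq_nonneg _)]
    ring
  rw [this]
  exact summable_Ewt_sq.div_const s0

-- the tilt exponent and weights
def xval (t : ℝ) (n : ℕ) : ℝ := 7*(Apt n)^2/t + 3*(Apt n)/2
def eexp (t x : ℝ) (m : ℕ) : ℝ := -(Apt m)^3 - (t/2)*(Apt m)^2 + t*x*(Apt m)
def ew (t x : ℝ) (m : ℕ) : ℝ := Real.exp (eexp t x m)

lemma ew_pos (t x : ℝ) (m : ℕ) : 0 < ew t x m := Real.exp_pos _

lemma Apt_succ (n : ℕ) : Apt (n+1) = 2 * Apt n := by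
  rw [Apt, Apt, pow_succ]; ring

lemma two_le_Apt {n : ℕ} (hn : 1 ≤ n) : 2 ≤ Apt n := by
  rw [Apt]
  calc (2:ℝ) = 2^1 := by norm_num
  _ ≤ 2^n := pow_le_pow_right₀ one_le_two hn

lemma eexp_fac (t : ℝ) (ht : 0 < t) (n m : ℕ) :
    eexp t (xval t n) m - eexp t (xval t n) n =
      (Apt m - Apt n) * (2*Apt n - Apt m) * (3*Apt n + Apt m + t/2) := by
  have htx : t * xval t n = 7*(Apt n)^2 + t*(3*Apt n)/2 := by
    rw [xval]; field_simp
  simp only [eexp]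
  rw [htx]
  ring

lemma ew_succ (t : ℝ) (ht : 0 < t) (n : ℕ) :
    ew t (xval t n) (n+1) = ew t (xval t n) n := by
  have h := eexp_fac t ht n (n+1)
  rw [Apt_succ n] at h
  have h0 : (2*Apt n - 2*Apt n) = 0 := sub_self _
  rw [h0, mul_zero, zero_mul] at h
  rw [ew, ew, sub_eq_zero.mp h]

lemma ew_small (t : ℝ) (ht : 0 < t) {n m : ℕ} (hn : 1 ≤ n)
    (hm1 : m ≠ n) (hm2 : m ≠ n+1) :
    ew t (xval t n) m ≤ ew t (xval t n) n * Real.exp (-(m:ℝ)-1) := by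
  set a := Apt n with ha_def
  set b := Apt m with hb_def
  have hbpos : 0 < b := Apt_pos m
  have hapos : 0 < a := Apt_pos n
  have ha2 : 2 ≤ a := two_le_Apt hn
  suffices hD : eexp t (xval t n) m - eexp t (xval t n) n ≤ -(m:ℝ)-1 by
    rw [ew, ew, ← Real.exp_add]
    exact Real.exp_le_exp.mpr (by linarith)
  rw [eexp_fac t ht n m]
  have hcase : m < n ∨ n + 2 ≤ m := by omega
  rcases hcase with hc | hc
  · -- m < n : b ≤ a/2
    have h2b : 2*b ≤ a := by
      have h := pow_le_pow_right₀ (one_le_two (α := ℝ)) (show m+1 ≤ n by omega)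
      rw [pow_succ] at h
      rw [ha_def, hb_def, Apt, Apt]
      linarith
    have hmle : (m:ℝ) + 1 ≤ a := by
      have h1 : (m:ℝ) + 1 ≤ (n:ℝ) := by exact_mod_cast Nat.succ_le_of_lt hc
      have h2 : (n:ℝ) + 1 ≤ 2^n := nat_le_two_pow n
      rw [ha_def, Apt]
      linarith
    have hF1 : b - a ≤ -(a/2) := by linarith
    have hP : a*a ≤ (2*a - b)*(3*a + b + t/2) := by nlinarith
    have hPnn : (0:ℝ) ≤ (2*a - b)*(3*a + b + t/2) := le_trans (by positivity) hP
    have hstep1 : (b - a) * ((2*a - b)*(3*a + b + t/2)) ≤ (-(a/2)) * ((2*a - b)*(3*a + b + t/2)) :=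
      mul_le_mul_of_nonneg_right hF1 hPnn
    have hstep2 : (-(a/2)) * ((2*a - b)*(3*a + b + t/2)) ≤ (-(a/2)) * (a*a) :=
      mul_le_mul_of_nonpos_left hP (by linarith)
    have : (b - a) * (2*a - b) * (3*a + b + t/2) ≤ (-(a/2)) * (a*a) := by
      rw [mul_assoc]; exact hstep1.trans hstep2
    nlinarith
  · -- n+2 ≤ m : 4a ≤ b
    have h4a : 4*a ≤ b := by
      have h := pow_le_pow_right₀ (one_le_two (α := ℝ)) hc
      rw [ha_def, hb_def, Apt, Apt]
      rw [show n+2 = (n+1)+1 by rfl, pow_succ, pow_succ] at h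
      linarith
    have hmle : (m:ℝ) + 1 ≤ b := by
      have := nat_le_two_pow m
      rw [hb_def, Apt]
      linarith
    have hF2 : 2*a - b ≤ -(b/2) := by linarith
    have hP : (b/2)*b ≤ (b - a)*(3*a + b + t/2) := by nlinarith
    have hPnn : (0:ℝ) ≤ (b - a)*(3*a + b + t/2) := le_trans (by positivity) hP
    have hstep1 : (2*a - b) * ((b - a)*(3*a + b + t/2)) ≤ (2*a - b) * ((b/2)*b) :=
      mul_le_mul_of_nonpos_left hP (by linarith)
    have hstep2 : (2*a - b) * ((b/2)*b) ≤ (-(b/2)) * ((b/2)*b) :=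
      mul_le_mul_of_nonneg_right hF2 (by positivity)
    have : (b - a) * (2*a - b) * (3*a + b + t/2) ≤ (-(b/2)) * ((b/2)*b) := by
      nlinarith [hstep1, hstep2]
    nlinarith

lemma exp_neg_rep (m : ℕ) : Real.exp (-(m:ℝ)-1) = Real.exp (-1) ^ m * Real.exp (-1) := by
  rw [← Real.exp_nat_mul, ← Real.exp_add]
  congr 1
  push_cast
  ring

lemma exp_neg_one_lt : Real.exp (-1 : ℝ) ≤ 1/2 := by
  have h := Real.add_one_le_exp (1:ℝ)
  rw [Real.exp_neg]
  rw [inv_le_comm₀ (Real.exp_pos 1) (by norm_num)]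
  linarith

lemma summable_expneg : Summable (fun m : ℕ => Real.exp (-(m:ℝ)-1)) := by
  have h := (summable_geometric_of_lt_one (Real.exp_pos (-1:ℝ)).le
    (by linarith [exp_neg_one_lt])).mul_right (Real.exp (-1))
  exact h.congr (fun m => (exp_neg_rep m).symm)

lemma tsum_expneg_le : ∑' m : ℕ, Real.exp (-(m:ℝ)-1) ≤ 1 := by
  have hr : Real.exp (-1:ℝ) < 1 := by linarith [exp_neg_one_lt]
  calc ∑' m : ℕ, Real.exp (-(m:ℝ)-1)
      = ∑' m : ℕ, Real.exp (-1) ^ m * Real.exp (-1) := by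
        exact tsum_congr exp_neg_rep
    _ = (1 - Real.exp (-1))⁻¹ * Real.exp (-1) := by
        rw [tsum_mul_right, tsum_geometric_of_lt_one (Real.exp_pos _).le hr]
    _ ≤ 1 := by
        rw [inv_mul_eq_div, div_le_one (by linarith [exp_neg_one_lt])]
        linarith [exp_neg_one_lt]

lemma xval_pos (t : ℝ) (ht : 0 < t) (n : ℕ) : 0 < xval t n := by
  have h := Apt_pos n
  rw [xval]
  have h1 : 0 < 7*(Apt n)^2/t := div_pos (by positivity) ht
  have h2 : 0 < 3*(Apt n)/2 := by positivity
  linarith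

lemma summable_ew_pow (t : ℝ) (ht : 0 < t) (n : ℕ) (k : ℕ) (hk : k ≤ 2) :
    Summable (fun m => ew t (xval t n) m * (Apt m)^k) := by
  have hx : 0 ≤ t * xval t n := le_of_lt (mul_pos ht (xval_pos t ht n))
  refine summable_master (t * xval t n) hx _
    (fun m => mul_nonneg (ew_pos _ _ _).le (pow_nonneg (Apt_pos m).le k)) (fun m => ?_)
  have he : eexp t (xval t n) m ≤ t * xval t n * 2^m - ((2:ℝ)^m)^3 := by
    rw [eexp]
    have h1 : 0 ≤ (t/2)*(Apt m)^2 := by positivity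
    have h2 : Apt m = (2:ℝ)^m := rfl
    rw [h2] at h1 ⊢
    linarith
  have h3 : (Apt m)^k ≤ ((2:ℝ)^m)^2 := by
    have : Apt m = (2:ℝ)^m := rfl
    rw [← this]
    exact pow_le_pow_right₀ (Apt_one_le m) hk
  exact mul_le_mul (Real.exp_le_exp.mpr he) h3 (pow_nonneg (Apt_pos m).le k) (Real.exp_pos _).le

set_option maxHeartbeats 1000000 in
/-- **Susceptibility blow-up.**  There exists a probability measure `π` on `ℝ` with finite
second moment such that for every `t > 0` the susceptibility
`χ_t(π) = sup_x Var(T_{t,tx}π)` is infinite, i.e., the variances of the isotropic tilts are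
unbounded over `x`. -/
theorem susceptibility_blowup :
    ∃ π : Measure ℝ, IsProbabilityMeasure π ∧
      Integrable (fun y => y^2) π ∧
      ∀ t : ℝ, 0 < t → ∀ C : ℝ, ∃ x : ℝ, C < var1 (tilt1 π t x) := by
  refine ⟨pi0, pi0_prob, pi0_moment, ?_⟩
  intro t ht C
  obtain ⟨n0, hn0⟩ := pow_unbounded_of_one_lt (6*C) (show (1:ℝ) < 4 by norm_num)
  set n := n0 + 1 with hn_def
  have hn1 : 1 ≤ n := by omega
  have hCa : 6*C < (Apt n)^2 := by
    have h1 : ((2:ℝ)^n)^2 = 4^n := by rw [← pow_mul, mul_comm, pow_mul]; norm_num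
    have h2 : (4:ℝ)^n0 ≤ 4^n := pow_le_pow_right₀ (by norm_num) (by omega)
    rw [Apt, h1]; linarith
  refine ⟨xval t n, ?_⟩
  set x := xval t n with hx
  -- summability of tilted weights
  have Sw2 : Summable (fun m => ew t x m * (Apt m)^2) := by
    rw [hx]; exact summable_ew_pow t ht n 2 le_rfl
  have Sw1 : Summable (fun m => ew t x m * Apt m) := by
    rw [hx]
    have h := summable_ew_pow t ht n 1 (by norm_num)
    simpa [pow_one] using h
  have Sw0 : Summable (fun m => ew t x m) := by
    rw [hx]
    have h := summable_ew_pow t ht n 0 (by norm_num)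
    simpa [pow_zero] using h
  set W := ∑' m, ew t x m with hW
  set U1 := ∑' m, ew t x m * Apt m with hU1
  set U2 := ∑' m, ew t x m * (Apt m)^2 with hU2
  have hwn : 0 < ew t x n := ew_pos t x n
  have hWw : ew t x n ≤ W := Sw0.le_tsum n (fun m _ => (ew_pos t x m).le)
  have hWpos : 0 < W := lt_of_lt_of_le hwn hWw
  -- the bound W ≤ 3 * w n
  have hsucc : ew t x (n+1) = ew t x n := by
    have h := ew_succ t ht n; rw [← hx] at h; exact h
  have hB : ∀ m, ew t x m ≤ ew t x n * Real.exp (-(m:ℝ)-1)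
      + ((if m = n then ew t x n else 0) + (if m = n+1 then ew t x n else 0)) := by
    intro m
    have e1 : 0 < ew t x n * Real.exp (-(m:ℝ)-1) := mul_pos hwn (Real.exp_pos _)
    by_cases hm1 : m = n
    · subst hm1
      rw [if_pos rfl, if_neg (by omega : ¬ n = n+1)]
      linarith
    by_cases hm2 : m = n+1
    · subst hm2
      rw [if_neg hm1, if_pos rfl, hsucc]
      linarith
    · rw [if_neg hm1, if_neg hm2]
      have h := ew_small t ht hn1 hm1 hm2
      rw [← hx] at h
      linarith
  have SB1 : Summable (fun m : ℕ => ew t x n * Real.exp (-(m:ℝ)-1)) :=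
    summable_expneg.mul_left _
  have SB2 : Summable (fun m : ℕ => if m = n then ew t x n else 0) :=
    (hasSum_ite_eq n (ew t x n)).summable
  have SB3 : Summable (fun m : ℕ => if m = n+1 then ew t x n else 0) :=
    (hasSum_ite_eq (n+1) (ew t x n)).summable
  have hW3 : W ≤ 3 * ew t x n := by
    have h := Summable.tsum_le_tsum hB Sw0 (SB1.add (SB2.add SB3))
    rw [Summable.tsum_add SB1 (SB2.add SB3), Summable.tsum_add SB2 SB3, tsum_ite_eq, tsum_ite_eq,
      tsum_mul_left] at h
    have h2 := tsum_expneg_le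
    nlinarith
  -- measure computations
  have hdens_meas : Measurable (fun y : ℝ => Real.exp (-(t/2) * y^2 + t * x * y)) := by
    fun_prop
  have hwE : (fun m => Ewt m / s0 * Real.exp (-(t/2) * (Apt m)^2 + t * x * (Apt m)))
      = fun m => ew t x m / s0 := by
    funext m
    have h1 : Real.exp (-(Apt m)^3) * Real.exp (-(t/2) * (Apt m)^2 + t * x * (Apt m))
        = ew t x m := by
      rw [ew, eexp, ← Real.exp_add]
      congr 1
      ring
    rw [Ewt, div_mul_eq_mul_div, h1]
  have hν : pi0.withDensity (fun y => ENNReal.ofReal (Real.exp (-(t/2) * y^2 + t * x * y)))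
      = dsum (fun m => ew t x m / s0) Apt := by
    rw [pi0, withDensity_dsum _ _ _ (fun m => div_nonneg (Ewt_pos m).le s0_pos.le) hdens_meas,
      hwE]
  have hmass : (pi0.withDensity fun y => ENNReal.ofReal (Real.exp (-(t/2) * y^2 + t * x * y)))
      univ = ENNReal.ofReal (W / s0) := by
    rw [hν, dsum_univ _ _ (fun m => div_nonneg (ew_pos t x m).le s0_pos.le)
      (Sw0.div_const s0), tsum_div_const]
  have htilt : tilt1 pi0 t x
      = (ENNReal.ofReal (W / s0))⁻¹ • dsum (fun m => ew t x m / s0) Apt := by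
    rw [tilt1, hmass, hν]
  -- integrals
  have hcnn : ∀ m, 0 ≤ ew t x m / s0 := fun m => div_nonneg (ew_pos t x m).le s0_pos.le
  have hInt1 : Integrable (fun y : ℝ => y) (dsum (fun m => ew t x m / s0) Apt) := by
    refine integrable_dsum _ _ _ hcnn measurable_id ?_
    have h : (fun m => ew t x m / s0 * |Apt m|) = fun m => ew t x m * Apt m / s0 := by
      funext m; rw [abs_of_nonneg (Apt_pos m).le]; ring
    rw [h]; exact Sw1.div_const s0
  have hInt2 : Integrable (fun y : ℝ => y^2) (dsum (fun m => ew t x m / s0) Apt) := by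
    refine integrable_dsum _ _ _ hcnn (by fun_prop) ?_
    have h : (fun m => ew t x m / s0 * |(Apt m)^2|) = fun m => ew t x m * (Apt m)^2 / s0 := by
      funext m; rw [abs_of_nonneg (sq_nonneg _)]; ring
    rw [h]; exact Sw2.div_const s0
  have htoReal : ((ENNReal.ofReal (W / s0))⁻¹).toReal = (W / s0)⁻¹ := by
    rw [ENNReal.toReal_inv, ENNReal.toReal_ofReal (div_nonneg hWpos.le s0_pos.le)]
  have hIy : ∫ y, y ∂(tilt1 pi0 t x) = U1 / W := by
    rw [htilt, integral_smul_measure, integral_dsum _ _ _ hcnn hInt1]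
    have h1 : ∑' m, ew t x m / s0 * Apt m = U1 / s0 := by
      rw [hU1, ← tsum_div_const]
      congr 1; funext m; ring
    rw [h1, htoReal, smul_eq_mul, inv_div]
    field_simp
    rw [mul_div_cancel_left₀ U1 s0_pos.ne']
  have hIy2 : ∫ y, y^2 ∂(tilt1 pi0 t x) = U2 / W := by
    rw [htilt, integral_smul_measure, integral_dsum _ _ _ hcnn hInt2]
    have h1 : ∑' m, ew t x m / s0 * (Apt m)^2 = U2 / s0 := by
      rw [hU2, ← tsum_div_const]
      congr 1; funext m; ring
    rw [h1, htoReal, smul_eq_mul, inv_div]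
    field_simp
    rw [mul_div_cancel_left₀ U2 s0_pos.ne']
  have hvar : var1 (tilt1 pi0 t x) = U2/W - (U1/W)^2 := by
    rw [var1, hIy, hIy2]
  set M := U1 / W with hM
  -- variance as a tsum
  have hcomb : (fun m => ew t x m * (Apt m - M)^2)
      = fun m => (ew t x m * (Apt m)^2 - 2*M*(ew t x m * Apt m)) + M^2 * ew t x m := by
    funext m; ring
  have SQ : Summable (fun m => ew t x m * (Apt m - M)^2) := by
    rw [hcomb]; exact (Sw2.sub (Sw1.mul_left (2*M))).add (Sw0.mul_left (M^2))
  have hSV : ∑' m, ew t x m * (Apt m - M)^2 = U2 - 2*M*U1 + M^2*W := by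
    rw [hcomb, Summable.tsum_add (Sw2.sub (Sw1.mul_left (2*M))) (Sw0.mul_left (M^2)),
      Summable.tsum_sub Sw2 (Sw1.mul_left (2*M)), tsum_mul_left, tsum_mul_left]
  have hpair : ew t x n * (Apt n - M)^2 + ew t x (n+1) * (Apt (n+1) - M)^2
      ≤ ∑' m, ew t x m * (Apt m - M)^2 := by
    have h := Summable.sum_le_tsum ({n, n+1} : Finset ℕ)
      (fun m _ => mul_nonneg (ew_pos t x m).le (sq_nonneg _)) SQ
    rwa [Finset.sum_pair (by omega : n ≠ n+1)] at h
  have hgap : (Apt n)^2/2 ≤ (Apt n - M)^2 + (Apt (n+1) - M)^2 := by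
    rw [Apt_succ n]
    nlinarith [sq_nonneg ((Apt n - M) + (2*Apt n - M))]
  have key : ew t x n * ((Apt n)^2/2) ≤ U2 - 2*M*U1 + M^2*W := by
    rw [← hSV]
    have h1 : ew t x n * ((Apt n)^2/2)
        ≤ ew t x n * ((Apt n - M)^2 + (Apt (n+1) - M)^2) :=
      mul_le_mul_of_nonneg_left hgap hwn.le
    rw [hsucc] at hpair
    nlinarith [hpair, h1]
  have hform : U2/W - (U1/W)^2 = (U2 - 2*M*U1 + M^2*W)/W := by
    rw [hM]; field_simp; ring
  rw [hvar, hform, lt_div_iff₀ hWpos]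
  have ha2 : 2 ≤ Apt n := two_le_Apt hn1
  rcases le_or_gt 0 C with hC0 | hC0
  · have h1 : C*W ≤ C*(3*ew t x n) := mul_le_mul_of_nonneg_left hW3 hC0
    have h2 : 3*C < (Apt n)^2/2 := by linarith
    have h3 : (3*C) * ew t x n < ((Apt n)^2/2) * ew t x n := mul_lt_mul_of_pos_right h2 hwn
    nlinarith [key, h1, h3]
  · have h4 : C * W < 0 := mul_neg_of_neg_of_pos hC0 hWpos
    have h5 : 0 < ew t x n * ((Apt n)^2/2) :=
      mul_pos hwn (div_pos (pow_pos (Apt_pos n) 2) two_pos)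
    linarith [key, h4, h5]
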